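/- For 0 < α < 1 < β and C > 0, the sum S_t := ∑_{s=1}^t (1+s)^{−β} exp(−C∫_{s+1}^{t+1} r^{−α} dr) satisfies S_t = O(t^{α−β}) as t → ∞. -/

import Mathlib

open Filter Asymptotics

lemma aux_bern {u p : ℝ} (hu0 : 0 ≤ u) (hp0 : 0 ≤ p) (hp1 : p ≤ 1) :
    u ^ p ≤ 1 - p + p * u := by
  have h := Real.geom_mean_le_arith_mean2_weighted hp0 (by linarith : (0:ℝ) ≤ 1 - p)
    hu0 zero_le_one (by ring)
  simp only [Real.one_rpow, mul_one] at h
  linarith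

lemma aux_key {p a b : ℝ} (hp0 : 0 < p) (hp1 : p ≤ 1) (ha : 0 < a) (hab : a ≤ b) :
    p * b ^ (p - 1) * (b - a) ≤ b ^ p - a ^ p := by
  have hb : 0 < b := lt_of_lt_of_le ha hab
  have h1 : (a / b) ^ p ≤ 1 - p + p * (a / b) :=
    aux_bern (le_of_lt (div_pos ha hb)) hp0.le hp1
  rw [Real.div_rpow ha.le hb.le] at h1
  have hbp : 0 < b ^ p := Real.rpow_pos_of_pos hb p
  have h3 : a ^ p ≤ (1 - p + p * (a / b)) * b ^ p := by
    have := mul_le_mul_of_nonneg_right h1 hbp.le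
    rwa [div_mul_cancel₀ _ hbp.ne'] at this
  have hbp1 : b ^ p = b ^ (p - 1) * b := by
    rw [← Real.rpow_add_one hb.ne' (p - 1)]; ring_nf
  have h4 : (1 - p + p * (a / b)) * b ^ p = b ^ p - p * b ^ (p - 1) * (b - a) := by
    rw [hbp1]; field_simp; ring
  linarith [h3, h4]

set_option maxHeartbeats 1000000 in
theorem stmt_11 (α β C : ℝ) (hα0 : 0 < α) (hα1 : α < 1) (hβ : 1 < β) (hC : 0 < C) :
    (fun t : ℕ => ∑ s ∈ Finset.Icc 1 t,
        (1 + (s : ℝ)) ^ (-β) *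
          Real.exp (-C * ((((t : ℝ) + 1) ^ (1 - α) - ((s : ℝ) + 1) ^ (1 - α)) / (1 - α))))
      =O[atTop] (fun t : ℕ => (t : ℝ) ^ (α - β)) := by
  have h1α : 0 < 1 - α := by linarith
  set K : ℝ := (2:ℝ) ^ β * (2 * (1 + C) / C) with hK
  have hK0 : 0 ≤ K := by positivity
  have htend : Tendsto (fun t : ℕ => ((t:ℝ)) ^ (1 + β - α) * Real.exp (-(C/4) * (t:ℝ) ^ (1 - α)))
      atTop (nhds 0) := by
    have hA := tendsto_rpow_mul_exp_neg_mul_atTop_nhds_zero ((1 + β - α)/(1 - α)) (C/4)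
      (by positivity)
    have hB : Tendsto (fun t : ℕ => ((t:ℝ)) ^ (1 - α)) atTop atTop :=
      (tendsto_rpow_atTop h1α).comp tendsto_natCast_atTop_atTop
    refine (hA.comp hB).congr' ?_
    filter_upwards [eventually_ge_atTop 1] with t ht
    have ht0 : (0:ℝ) ≤ (t:ℝ) := Nat.cast_nonneg t
    have hexp : (1 - α) * ((1 + β - α)/(1 - α)) = 1 + β - α := by field_simp
    simp only [Function.comp_apply]
    rw [← Real.rpow_mul ht0, hexp]
  have hev1 : ∀ᶠ t : ℕ in atTop,
      (t:ℝ) ^ (1 + β - α) * Real.exp (-(C/4) * (t:ℝ) ^ (1 - α)) ≤ 1 :=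
    (htend.eventually (eventually_lt_nhds zero_lt_one)).mono fun t h => h.le
  rw [isBigO_iff]
  refine ⟨1 + K, ?_⟩
  filter_upwards [eventually_ge_atTop 2, hev1] with t ht2 hexp1
  have hT2 : (2:ℝ) ≤ (t:ℝ) := by exact_mod_cast ht2
  have hT0 : (0:ℝ) < (t:ℝ) := by linarith
  set T : ℝ := (t:ℝ) with hTdef
  set x : ℝ := C * (T + 1) ^ (-α) with hxdef
  have hx0 : 0 < x := by
    have := Real.rpow_pos_of_pos (by linarith : (0:ℝ) < T + 1) (-α)
    positivity
  have hxC : x ≤ C := by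
    have h1 : (T + 1) ^ (-α) ≤ 1 :=
      Real.rpow_le_one_of_one_le_of_nonpos (by linarith) (by linarith)
    nlinarith
  set q : ℝ := Real.exp (-x) with hqdef
  have hq0 : 0 < q := Real.exp_pos _
  have hq1 : q < 1 := by
    rw [hqdef, ← Real.exp_zero]
    exact Real.exp_lt_exp.2 (by linarith)
  -- per-term bound
  have hterm : ∀ s ∈ Finset.Icc 1 t,
      (1 + (s:ℝ)) ^ (-β) * Real.exp (-C * (((T + 1) ^ (1-α) - ((s:ℝ) + 1) ^ (1-α)) / (1-α)))
        ≤ (1 + (s:ℝ)) ^ (-β) * q ^ (t - s) := by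
    intro s hs
    obtain ⟨hs1, hst⟩ := Finset.mem_Icc.1 hs
    have hS1 : (1:ℝ) ≤ (s:ℝ) := by exact_mod_cast hs1
    have hST : (s:ℝ) ≤ T := by rw [hTdef]; exact_mod_cast hst
    refine mul_le_mul_of_nonneg_left ?_ (Real.rpow_nonneg (by linarith) _)
    rw [hqdef, ← Real.exp_nat_mul, Real.exp_le_exp]
    have hcast : ((t - s : ℕ) : ℝ) = T - (s:ℝ) := by
      rw [Nat.cast_sub hst]
    rw [hcast]
    have key := aux_key (p := 1 - α) (a := (s:ℝ) + 1) (b := T + 1) h1α (by linarith)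
      (by linarith) (by linarith)
    rw [show (1:ℝ) - α - 1 = -α by ring] at key
    rw [mul_neg, neg_mul, neg_le_neg_iff]
    have goal2 : (T - (s:ℝ)) * x * (1 - α)
        ≤ C * ((T+1)^(1-α) - ((s:ℝ)+1)^(1-α)) := by
      calc (T - (s:ℝ)) * x * (1 - α)
          = C * ((1-α) * (T+1)^(-α) * ((T+1) - ((s:ℝ)+1))) := by rw [hxdef]; ring
        _ ≤ _ := mul_le_mul_of_nonneg_left key hC.le
    rw [mul_div_assoc', le_div_iff₀ h1α]
    exact goal2
  set m := t / 2 with hm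
  have hm1 : 1 ≤ m := by omega
  have hmt : m ≤ t := Nat.div_le_self t 2
  have hIcc0 : Finset.Icc 1 t = Finset.Ioc 0 t := by
    ext a; simp only [Finset.mem_Icc, Finset.mem_Ioc]; omega
  have hsum1 : (∑ s ∈ Finset.Icc 1 t, (1 + (s:ℝ)) ^ (-β) *
        Real.exp (-C * (((T + 1) ^ (1-α) - ((s:ℝ) + 1) ^ (1-α)) / (1-α))))
      ≤ ∑ s ∈ Finset.Icc 1 t, (1 + (s:ℝ)) ^ (-β) * q ^ (t - s) :=
    Finset.sum_le_sum hterm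
  have hsplitsum : ∑ s ∈ Finset.Icc 1 t, (1 + (s:ℝ)) ^ (-β) * q ^ (t - s)
      = (∑ s ∈ Finset.Ioc 0 m, (1 + (s:ℝ)) ^ (-β) * q ^ (t - s))
        + ∑ s ∈ Finset.Ioc m t, (1 + (s:ℝ)) ^ (-β) * q ^ (t - s) := by
    rw [hIcc0, ← Finset.sum_Ioc_consecutive _ (Nat.zero_le m) hmt]
  have hP : (∑ s ∈ Finset.Ioc 0 m, (1 + (s:ℝ)) ^ (-β) * q ^ (t - s))
      ≤ (m:ℝ) * q ^ (t - m) := by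
    have hb : ∀ s ∈ Finset.Ioc 0 m, (1 + (s:ℝ)) ^ (-β) * q ^ (t - s) ≤ q ^ (t - m) := by
      intro s hs
      obtain ⟨hs0, hsm⟩ := Finset.mem_Ioc.1 hs
      have hS0 : (0:ℝ) ≤ (s:ℝ) := Nat.cast_nonneg s
      have h1 : (1 + (s:ℝ)) ^ (-β) ≤ 1 :=
        Real.rpow_le_one_of_one_le_of_nonpos (by linarith) (by linarith)
      have h2 : q ^ (t - s) ≤ q ^ (t - m) :=
        pow_le_pow_of_le_one hq0.le hq1.le (Nat.sub_le_sub_left hsm t)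
      calc (1 + (s:ℝ)) ^ (-β) * q ^ (t - s) ≤ 1 * q ^ (t - m) :=
            mul_le_mul h1 h2 (pow_nonneg hq0.le _) zero_le_one
        _ = q ^ (t - m) := one_mul _
    have := Finset.sum_le_card_nsmul (Finset.Ioc 0 m) _ (q ^ (t - m)) hb
    simpa [Nat.card_Ioc, nsmul_eq_mul] using this
  have hT1a : T * T ^ (-α) = T ^ (1-α) := by
    rw [show (1:ℝ) - α = 1 + -α by ring, Real.rpow_add hT0, Real.rpow_one]
  have hPexp : (m:ℝ) * q ^ (t - m) ≤ T * Real.exp (-(C/4) * T ^ (1-α)) := by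
    have hmT : (m:ℝ) ≤ T := by rw [hTdef]; exact_mod_cast hmt
    have hm0 : (0:ℝ) ≤ (m:ℝ) := Nat.cast_nonneg m
    refine mul_le_mul hmT ?_ (pow_nonneg hq0.le _) (by linarith)
    rw [hqdef, ← Real.exp_nat_mul, Real.exp_le_exp]
    have hcast : ((t - m : ℕ):ℝ) = T - (m:ℝ) := by rw [Nat.cast_sub hmt]
    rw [hcast, mul_neg, neg_mul, neg_le_neg_iff]
    have hmle : (m:ℝ) ≤ T / 2 := by
      have h := Nat.cast_div_le (α := ℝ) (m := t) (n := 2)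
      simpa using h
    have hTm : T / 2 ≤ T - (m:ℝ) := by linarith
    have hx1 : C / 2 * T ^ (-α) ≤ x := by
      rw [hxdef]
      have h2T : T + 1 ≤ 2 * T := by linarith
      have hstep : (2*T) ^ (-α) ≤ (T+1) ^ (-α) :=
        Real.rpow_le_rpow_of_nonpos (by linarith) h2T (by linarith)
      have hmul : (2*T) ^ (-α) = 2 ^ (-α) * T ^ (-α) := Real.mul_rpow (by norm_num) hT0.le
      have h2a : (2:ℝ)⁻¹ ≤ 2 ^ (-α) := by
        have h := Real.rpow_le_rpow_of_exponent_le (x := 2) one_le_two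
          (by linarith : -(1:ℝ) ≤ -α)
        rwa [Real.rpow_neg_one] at h
      have hTa : 0 ≤ T ^ (-α) := Real.rpow_nonneg hT0.le _
      nlinarith [hstep, hmul, h2a, hTa, hC]
    calc C/4 * T ^ (1-α) = (T/2) * (C/2 * T ^ (-α)) := by rw [← hT1a]; ring
      _ ≤ (T - (m:ℝ)) * x := mul_le_mul hTm hx1 (by positivity) (by linarith)
  have hQ : (∑ s ∈ Finset.Ioc m t, (1 + (s:ℝ)) ^ (-β) * q ^ (t - s)) ≤ K * T ^ (α-β) := by
    have hcoef : ∀ s ∈ Finset.Ioc m t,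
        (1 + (s:ℝ)) ^ (-β) * q ^ (t - s) ≤ (T/2) ^ (-β) * q ^ (t - s) := by
      intro s hs
      obtain ⟨hms, hst⟩ := Finset.mem_Ioc.1 hs
      have hms' : (m:ℝ) + 1 ≤ (s:ℝ) := by exact_mod_cast hms
      have hmlow : (T - 1)/2 ≤ (m:ℝ) := by
        have h : t ≤ 2*m + 1 := by omega
        have h' : (t:ℝ) ≤ 2*(m:ℝ)+1 := by exact_mod_cast h
        linarith
      have hbase : T/2 ≤ 1 + (s:ℝ) := by linarith
      refine mul_le_mul_of_nonneg_right ?_ (pow_nonneg hq0.le _)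
      exact Real.rpow_le_rpow_of_nonpos (by positivity) hbase (by linarith)
    have hgeom : (∑ s ∈ Finset.Ioc m t, q ^ (t - s)) ≤ (1 - q)⁻¹ := by
      have hsub : Finset.Ioc m t ⊆ Finset.range (t+1) := by
        intro s hs
        rw [Finset.mem_range]
        exact Nat.lt_succ_of_le (Finset.mem_Ioc.1 hs).2
      have h1 : (∑ s ∈ Finset.Ioc m t, q ^ (t - s)) ≤ ∑ s ∈ Finset.range (t+1), q ^ (t - s) :=
        Finset.sum_le_sum_of_subset_of_nonneg hsub (fun _ _ _ => pow_nonneg hq0.le _)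
      have h2 : (∑ s ∈ Finset.range (t+1), q ^ (t - s)) = ∑ s ∈ Finset.range (t+1), q ^ s := by
        have h := Finset.sum_range_reflect (fun j => q ^ j) (t+1)
        simpa using h
      have h3 : (∑ s ∈ Finset.range (t+1), q ^ s) ≤ ∑' s : ℕ, q ^ s :=
        Summable.sum_le_tsum _ (fun i _ => pow_nonneg hq0.le _) (summable_geometric_of_lt_one hq0.le hq1)
      rw [tsum_geometric_of_lt_one hq0.le hq1] at h3
      linarith
    have hinv : (1 - q)⁻¹ ≤ (1 + C)/C * (T+1) ^ α := by
      have hqle : q ≤ (1+x)⁻¹ := by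
        rw [hqdef, Real.exp_neg]
        exact inv_anti₀ (by linarith) (by linarith [Real.add_one_le_exp x])
      have h1q : x/(1+C) ≤ 1 - q := by
        have h1 : 1 - (1+x)⁻¹ = x/(1+x) := by field_simp; ring
        have h2 : x/(1+C) ≤ x/(1+x) := by gcongr <;> linarith
        linarith
      have h1q0 : 0 < x/(1+C) := by positivity
      have hstep : (1 - q)⁻¹ ≤ (x/(1+C))⁻¹ := inv_anti₀ h1q0 h1q
      have hxeq : (x/(1+C))⁻¹ = (1+C)/C * (T+1) ^ α := by
        rw [inv_div, hxdef, Real.rpow_neg (by linarith : (0:ℝ) ≤ T + 1)]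
        have hTp : (0:ℝ) < (T+1) ^ α := Real.rpow_pos_of_pos (by linarith) α
        field_simp
      rw [hxeq] at hstep
      exact hstep
    calc (∑ s ∈ Finset.Ioc m t, (1 + (s:ℝ)) ^ (-β) * q ^ (t - s))
        ≤ ∑ s ∈ Finset.Ioc m t, (T/2) ^ (-β) * q ^ (t - s) := Finset.sum_le_sum hcoef
      _ = (T/2) ^ (-β) * ∑ s ∈ Finset.Ioc m t, q ^ (t - s) := by rw [Finset.mul_sum]
      _ ≤ (T/2) ^ (-β) * ((1+C)/C * (T+1) ^ α) := by
          exact mul_le_mul_of_nonneg_left (le_trans hgeom hinv)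
            (Real.rpow_nonneg (by positivity) _)
      _ ≤ K * T ^ (α-β) := by
          have e1 : (T/2) ^ (-β) = T ^ (-β) * 2 ^ β := by
            rw [Real.div_rpow hT0.le (by norm_num), Real.rpow_neg (by norm_num : (0:ℝ) ≤ 2),
              div_eq_mul_inv, inv_inv]
          have e2 : (T+1) ^ α ≤ 2 * T ^ α := by
            have h2T : T + 1 ≤ 2*T := by linarith
            have h := Real.rpow_le_rpow (by linarith) h2T hα0.le
            rw [Real.mul_rpow (by norm_num) hT0.le] at h
            have h2a : (2:ℝ) ^ α ≤ 2 := by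
              calc (2:ℝ) ^ α ≤ 2 ^ (1:ℝ) :=
                    Real.rpow_le_rpow_of_exponent_le one_le_two hα1.le
                _ = 2 := Real.rpow_one 2
            nlinarith [Real.rpow_nonneg hT0.le α]
          have e3 : T ^ (-β) * T ^ α = T ^ (α-β) := by
            rw [← Real.rpow_add hT0]; ring_nf
          rw [e1, hK]
          have hTb : 0 ≤ T ^ (-β) := Real.rpow_nonneg hT0.le _
          calc T ^ (-β) * 2 ^ β * ((1+C)/C * (T+1) ^ α)
              ≤ T ^ (-β) * 2 ^ β * ((1+C)/C * (2 * T ^ α)) := by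
                refine mul_le_mul_of_nonneg_left ?_ (by positivity)
                exact mul_le_mul_of_nonneg_left e2 (by positivity)
            _ = (2:ℝ) ^ β * (2*(1+C)/C) * (T ^ (-β) * T ^ α) := by ring
            _ = (2:ℝ) ^ β * (2*(1+C)/C) * T ^ (α-β) := by rw [e3]
  have hnonneg : 0 ≤ ∑ s ∈ Finset.Icc 1 t, (1 + (s:ℝ)) ^ (-β) *
      Real.exp (-C * (((T + 1) ^ (1-α) - ((s:ℝ) + 1) ^ (1-α)) / (1-α))) :=
    Finset.sum_nonneg fun s _ =>
      mul_nonneg (Real.rpow_nonneg (by positivity) _) (Real.exp_pos _).le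
  have hTexp : T * Real.exp (-(C/4) * T ^ (1-α)) ≤ T ^ (α-β) := by
    have h0 : 0 ≤ T ^ (α-β) := Real.rpow_nonneg hT0.le _
    have h1 := mul_le_mul_of_nonneg_right hexp1 h0
    have h2 : T ^ (1+β-α) * T ^ (α-β) = T := by
      rw [← Real.rpow_add hT0, show (1+β-α)+(α-β) = (1:ℝ) by ring, Real.rpow_one]
    calc T * Real.exp (-(C/4) * T ^ (1-α))
        = T ^ (1+β-α) * T ^ (α-β) * Real.exp (-(C/4) * T ^ (1-α)) := by rw [h2]
      _ = T ^ (1+β-α) * Real.exp (-(C/4) * T ^ (1-α)) * T ^ (α-β) := by ring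
      _ ≤ 1 * T ^ (α-β) := h1
      _ = T ^ (α-β) := one_mul _
  have hfin : (∑ s ∈ Finset.Icc 1 t, (1 + (s:ℝ)) ^ (-β) *
      Real.exp (-C * (((T + 1) ^ (1-α) - ((s:ℝ) + 1) ^ (1-α)) / (1-α))))
      ≤ (1 + K) * T ^ (α-β) := by
    have := hsum1.trans (le_of_eq hsplitsum)
    nlinarith [hP, hPexp, hQ, hTexp, this]
  rw [Real.norm_eq_abs, Real.norm_eq_abs, abs_of_nonneg hnonneg,
    abs_of_nonneg (Real.rpow_nonneg hT0.le _)]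
  exact hfin
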